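/- arXiv:1801.06838 — 2 statements merged into one kernel-verified Lean document; each statement's English description precedes it below -/
import Mathlib

section
/- Let G be a locally compact, second countable Hausdorff topological group with left Haar measure m and modular function Δ, and let τ : G → G be a Borel measurable map. Then the map C^τ defined by [C^τ(K)](x,y) := Δ(y)^{-1/2} K(τ(y x⁻¹)·x, x·y⁻¹) preserves the L²-norm on G×G: for every measurable K : G×G → ℂ one has ∫_G ∫_G |[C^τ(K)](x,y)|² dm(x) dm(y) = ∫_G ∫_G |K(x,y)|² dm(x) dm(y) (as an equality in [0,∞]). -/
open MeasureTheory ENNReal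

/-- For a locally compact second countable Hausdorff group `G` with left Haar
measure `m` and modular function `Δ` (characterized by
`Measure.map (· * x) m = ENNReal.ofReal (Δ x)⁻¹ • m`), and any Borel measurable `τ : G → G`,
the change-of-variables map
`[C^τ(K)](x,y) = Δ(y)^{-1/2} K(τ(y x⁻¹)·x, x·y⁻¹)` preserves the `L²`-norm on `G × G`,
as an equality in `[0,∞]`. -/
theorem ctau_preserves_L2_norm
    {G : Type*} [Group G] [TopologicalSpace G] [IsTopologicalGroup G]
    [LocallyCompactSpace G] [SecondCountableTopology G] [T2Space G]
    [MeasurableSpace G] [BorelSpace G]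
    (m : Measure G) [m.IsHaarMeasure]
    (Δ : G → ℝ) (hΔpos : ∀ x, 0 < Δ x) (hΔcont : Continuous Δ)
    (hΔ : ∀ x : G, Measure.map (fun y => y * x) m = ENNReal.ofReal (Δ x)⁻¹ • m)
    (τ : G → G) (hτ : Measurable τ)
    (K : G × G → ℂ) (hK : Measurable K) :
    ∫⁻ x, ∫⁻ y,
        (‖(Real.sqrt (Δ y))⁻¹ • K (τ (y * x⁻¹) * x, x * y⁻¹)‖₊ : ℝ≥0∞) ^ 2 ∂m ∂m
      = ∫⁻ x, ∫⁻ y, (‖K (x, y)‖₊ : ℝ≥0∞) ^ 2 ∂m ∂m := by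
  -- Basic facts about the density `D y = ofReal (Δ y)⁻¹`.
  have hD0 : ∀ y : G, ENNReal.ofReal (Δ y)⁻¹ ≠ 0 := fun y =>
    (ENNReal.ofReal_pos.mpr (inv_pos.mpr (hΔpos y))).ne'
  have hDtop : ∀ y : G, ENNReal.ofReal (Δ y)⁻¹ ≠ ∞ := fun y => ENNReal.ofReal_ne_top
  have hDmeas : Measurable (fun y => ENNReal.ofReal (Δ y)⁻¹) :=
    ENNReal.measurable_ofReal.comp (hΔcont.measurable.inv)
  -- Right translation substitution.
  have subst : ∀ (x : G) (f : G → ℝ≥0∞), Measurable f →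
      ∫⁻ y, f (y * x) ∂m = ENNReal.ofReal (Δ x)⁻¹ * ∫⁻ y, f y ∂m := by
    intro x f hf
    rw [← lintegral_map hf (measurable_mul_const x), hΔ x, lintegral_smul_measure, smul_eq_mul]
  -- Cancellation of scalars acting on `m`.
  obtain ⟨K₀, hK₀c, hK₀n⟩ := exists_compact_mem_nhds (1 : G)
  have key : ∀ c d : ℝ≥0∞, c • m = d • m → c = d := by
    intro c d h
    have h2 : c * m K₀ = d * m K₀ := by
      have := congrArg (fun μ : Measure G => μ K₀) h
      simpa [Measure.smul_apply, smul_eq_mul] using this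
    exact (ENNReal.mul_left_inj (m.measure_pos_of_mem_nhds hK₀n).ne'
      hK₀c.measure_lt_top.ne).mp h2
  -- The density is multiplicative.
  have hmulD : ∀ x y : G, ENNReal.ofReal (Δ (x * y))⁻¹
      = ENNReal.ofReal (Δ x)⁻¹ * ENNReal.ofReal (Δ y)⁻¹ := by
    intro x y
    apply key
    rw [← hΔ (x * y)]
    have hc : (fun a : G => a * (x * y)) = (fun a => a * y) ∘ (fun a => a * x) := by
      funext a; simp [Function.comp, mul_assoc]
    rw [hc, ← Measure.map_map (measurable_mul_const y) (measurable_mul_const x), hΔ x,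
      Measure.map_smul, hΔ y, smul_smul, mul_comm]
  have hD1 : ENNReal.ofReal (Δ (1 : G))⁻¹ = 1 := by
    apply key
    have hid : (fun y : G => y * 1) = id := funext fun y => mul_one y
    rw [one_smul, ← hΔ 1, hid, Measure.map_id]
  have hDinv : ∀ y : G, ENNReal.ofReal (Δ y⁻¹)⁻¹ * ENNReal.ofReal (Δ y)⁻¹ = 1 := by
    intro y
    rw [← hmulD, inv_mul_cancel, hD1]
  -- The "inverted weighted" measure transformation.
  have lintT : ∀ (μ : Measure G) (f : G → ℝ≥0∞), Measurable f →
      ∫⁻ a, f a ∂((μ.withDensity (fun y => ENNReal.ofReal (Δ y)⁻¹)).map (·⁻¹))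
        = ∫⁻ y, f y⁻¹ * ENNReal.ofReal (Δ y)⁻¹ ∂μ := by
    intro μ f hf
    rw [lintegral_map hf measurable_inv,
      lintegral_withDensity_eq_lintegral_mul μ hDmeas (g := fun a => f a⁻¹)
        (hf.comp measurable_inv)]
    exact lintegral_congr fun y => by simp [mul_comm]
  set ν : Measure G := (m.withDensity (fun y => ENNReal.ofReal (Δ y)⁻¹)).map (·⁻¹) with hνdef
  have hνs : ∀ s : Set G, MeasurableSet s →
      ν s = ∫⁻ y, s.indicator 1 y⁻¹ * ENNReal.ofReal (Δ y)⁻¹ ∂m := by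
    intro s hs
    rw [← lintT m _ (measurable_one.indicator hs), lintegral_indicator_one hs]
  -- `ν` is a left invariant measure, finite on compacts.
  haveI : ν.IsMulLeftInvariant := by
    constructor
    intro x
    ext s hs
    rw [Measure.map_apply (measurable_const_mul x) hs]
    have hind : ∀ z : G, ((fun y => x * y) ⁻¹' s).indicator (1 : G → ℝ≥0∞) z
        = s.indicator 1 (x * z) := by
      intro z
      by_cases h : x * z ∈ s <;> simp [Set.indicator_apply, h, Set.mem_preimage]
    have hFmeas : Measurable fun y : G => s.indicator (1 : G → ℝ≥0∞) (x * y⁻¹)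
        * ENNReal.ofReal (Δ y)⁻¹ :=
      ((measurable_one.indicator hs).comp (measurable_inv.const_mul x)).mul hDmeas
    have h := subst x _ hFmeas
    have hL : ∫⁻ y, s.indicator (1 : G → ℝ≥0∞) (x * (y * x)⁻¹)
        * ENNReal.ofReal (Δ (y * x))⁻¹ ∂m = ν s * ENNReal.ofReal (Δ x)⁻¹ := by
      rw [hνs s hs, ← lintegral_mul_const' _ _ (hDtop x)]
      refine lintegral_congr fun y => ?_
      rw [hmulD, mul_inv_rev, mul_inv_cancel_left, mul_assoc]
    rw [hL] at h
    have h2 : ν s = ∫⁻ y, s.indicator (1 : G → ℝ≥0∞) (x * y⁻¹)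
        * ENNReal.ofReal (Δ y)⁻¹ ∂m := by
      have := h.symm
      rw [mul_comm (ν s)] at this
      exact ((ENNReal.mul_right_inj (hD0 x) (hDtop x)).mp this).symm
    rw [hνs _ ((measurable_const_mul x) hs)]
    rw [h2]
    exact lintegral_congr fun y => by rw [hind]
  haveI : IsFiniteMeasureOnCompacts ν := by
    constructor
    intro K hKc
    rw [hνdef, Measure.map_apply measurable_inv hKc.measurableSet,
      withDensity_apply _ (measurable_inv hKc.measurableSet)]
    have hKinv : (·⁻¹) ⁻¹' K = K⁻¹ := rfl
    rw [hKinv]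
    have hcont : ContinuousOn (fun y => (Δ y)⁻¹) K⁻¹ :=
      (hΔcont.inv₀ fun y => (hΔpos y).ne').continuousOn
    obtain ⟨C, hC⟩ := hKc.inv.bddAbove_image hcont
    calc ∫⁻ y in K⁻¹, ENNReal.ofReal (Δ y)⁻¹ ∂m
        ≤ ∫⁻ _ in K⁻¹, ENNReal.ofReal C ∂m := by
          refine setLIntegral_mono measurable_const fun y hy => ?_
          exact ENNReal.ofReal_le_ofReal (hC (Set.mem_image_of_mem _ hy))
      _ = ENNReal.ofReal C * m K⁻¹ := setLIntegral_const _ _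
      _ < ∞ := ENNReal.mul_lt_top ENNReal.ofReal_lt_top hKc.inv.measure_lt_top
  -- Uniqueness of Haar measure: `ν = c • m`, and applying the transform twice shows `c = 1`.
  set c : ℝ≥0∞ := (Measure.haarScalarFactor ν m : ℝ≥0∞) with hcdef
  have hν : ν = c • m := by
    have := Measure.isMulLeftInvariant_eq_smul ν m
    rw [this, hcdef, ENNReal.smul_def]
  have hTν : ((ν.withDensity (fun y => ENNReal.ofReal (Δ y)⁻¹)).map (·⁻¹)) = m := by
    ext s hs
    rw [← lintegral_indicator_one hs, lintT ν _ (measurable_one.indicator hs)]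
    have h2 : ∫⁻ y, s.indicator 1 y⁻¹ * ENNReal.ofReal (Δ y)⁻¹ ∂ν
        = ∫⁻ y, (s.indicator (1 : G → ℝ≥0∞) (y⁻¹)⁻¹ * ENNReal.ofReal (Δ y⁻¹)⁻¹)
            * ENNReal.ofReal (Δ y)⁻¹ ∂m := by
      rw [hνdef]
      refine lintT m _ ?_
      exact ((measurable_one.indicator hs).comp measurable_inv).mul hDmeas
    rw [h2, ← lintegral_indicator_one hs]
    exact lintegral_congr fun y => by rw [inv_inv, mul_assoc, hDinv y, mul_one]
  have hTν2 : ((ν.withDensity (fun y => ENNReal.ofReal (Δ y)⁻¹)).map (·⁻¹)) = (c * c) • m := by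
    conv_lhs => rw [hν]
    rw [withDensity_smul_measure, Measure.map_smul, ← hνdef, hν, smul_smul]
  have hcc : c * c = 1 := by
    apply key
    rw [← hTν2, hTν, one_smul]
  have hc1 : c = 1 := by
    rcases lt_trichotomy c 1 with h | h | h
    · exfalso
      have : c * c < 1 * 1 := ENNReal.mul_lt_mul h h
      rw [hcc, one_mul] at this
      exact lt_irrefl _ this
    · exact h
    · exfalso
      have : (1 : ℝ≥0∞) * 1 < c * c := ENNReal.mul_lt_mul h h
      rw [hcc, one_mul] at this
      exact lt_irrefl _ this
  have hνm : ν = m := by rw [hν, hc1, one_smul]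
  -- The key inversion formula.
  have inv_int : ∀ f : G → ℝ≥0∞, Measurable f →
      ∫⁻ y, f y⁻¹ * ENNReal.ofReal (Δ y)⁻¹ ∂m = ∫⁻ y, f y ∂m := by
    intro f hf
    rw [← lintT m f hf, ← hνdef, hνm]
  -- Main computation.
  have hfmeas : Measurable (fun p : G × G => (‖K p‖₊ : ℝ≥0∞) ^ 2) :=
    (hK.nnnorm.coe_nnreal_ennreal).pow_const 2
  have hpt : ∀ (y : G) (z : ℂ), ((‖(Real.sqrt (Δ y))⁻¹ • z‖₊ : ℝ≥0∞)) ^ 2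
      = ENNReal.ofReal (Δ y)⁻¹ * (‖z‖₊ : ℝ≥0∞) ^ 2 := by
    intro y z
    rw [nnnorm_smul, ENNReal.coe_mul, mul_pow]
    congr 1
    rw [← ENNReal.ofReal_coe_nnreal, coe_nnnorm, ← ENNReal.ofReal_pow (norm_nonneg _)]
    congr 1
    rw [Real.norm_eq_abs, abs_of_nonneg (inv_nonneg.mpr (Real.sqrt_nonneg _)),
      inv_pow, Real.sq_sqrt (hΔpos y).le]
  suffices H : ∀ f : G × G → ℝ≥0∞, Measurable f →
      ∫⁻ x, ∫⁻ y, ENNReal.ofReal (Δ y)⁻¹ * f (τ (y * x⁻¹) * x, x * y⁻¹) ∂m ∂m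
        = ∫⁻ x, ∫⁻ y, f (x, y) ∂m ∂m by
    simp only [hpt]
    exact H _ hfmeas
  intro f hf
  have step1 : ∀ x : G, ∫⁻ y, ENNReal.ofReal (Δ y)⁻¹ * f (τ (y * x⁻¹) * x, x * y⁻¹) ∂m
      = ∫⁻ y, ENNReal.ofReal (Δ y)⁻¹ * f (τ y * x, y⁻¹) ∂m := by
    intro x
    have hmeasF : Measurable fun y => ENNReal.ofReal (Δ y)⁻¹ * f (τ (y * x⁻¹) * x, x * y⁻¹) :=
      hDmeas.mul (hf.comp (((hτ.comp (measurable_mul_const x⁻¹)).mul_const x).prodMk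
        (measurable_inv.const_mul x)))
    have h := subst x _ hmeasF
    have hL : ∫⁻ y, ENNReal.ofReal (Δ (y * x))⁻¹
          * f (τ (y * x * x⁻¹) * x, x * (y * x)⁻¹) ∂m
        = (∫⁻ y, ENNReal.ofReal (Δ y)⁻¹ * f (τ y * x, y⁻¹) ∂m)
          * ENNReal.ofReal (Δ x)⁻¹ := by
      rw [← lintegral_mul_const' _ _ (hDtop x)]
      refine lintegral_congr fun y => ?_
      rw [hmulD, mul_inv_cancel_right, mul_inv_rev, mul_inv_cancel_left]
      ring
    rw [hL, mul_comm] at h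
    exact ((ENNReal.mul_right_inj (hD0 x) (hDtop x)).mp h).symm
  calc ∫⁻ x, ∫⁻ y, ENNReal.ofReal (Δ y)⁻¹ * f (τ (y * x⁻¹) * x, x * y⁻¹) ∂m ∂m
      = ∫⁻ x, ∫⁻ y, ENNReal.ofReal (Δ y)⁻¹ * f (τ y * x, y⁻¹) ∂m ∂m :=
        lintegral_congr step1
    _ = ∫⁻ y, ∫⁻ x, ENNReal.ofReal (Δ y)⁻¹ * f (τ y * x, y⁻¹) ∂m ∂m := by
        refine lintegral_lintegral_swap ?_
        exact ((hDmeas.comp measurable_snd).mul (hf.comp (((hτ.comp measurable_snd).mul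
          measurable_fst).prodMk measurable_snd.inv))).aemeasurable
    _ = ∫⁻ y, ENNReal.ofReal (Δ y)⁻¹ * ∫⁻ x, f (τ y * x, y⁻¹) ∂m ∂m := by
        refine lintegral_congr fun y => ?_
        exact lintegral_const_mul _ (hf.comp ((measurable_const_mul (τ y)).prodMk
          measurable_const))
    _ = ∫⁻ y, ENNReal.ofReal (Δ y)⁻¹ * ∫⁻ x, f (x, y⁻¹) ∂m ∂m := by
        refine lintegral_congr fun y => ?_
        rw [lintegral_mul_left_eq_self (fun x => f (x, y⁻¹)) (τ y)]
    _ = ∫⁻ y, ∫⁻ x, f (x, y) ∂m ∂m := by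
        have hg : Measurable fun y => ∫⁻ x, f (x, y) ∂m :=
          Measurable.lintegral_prod_left (hf.comp (measurable_fst.prodMk measurable_snd))
        rw [← inv_int _ hg]
        exact lintegral_congr fun y => mul_comm _ _
    _ = ∫⁻ x, ∫⁻ y, f (x, y) ∂m ∂m := by
        refine (lintegral_lintegral_swap ?_).symm
        exact (hf.comp (measurable_fst.prodMk measurable_snd)).aemeasurable
end

section
/- Let G be a locally compact, second countable Hausdorff topological group with left Haar measure m and modular function Δ, and let τ : G → G be a Borel measurable map. Then the map K ↦ C^τ(K), where [C^τ(K)](x,y) := Δ(y)^{-1/2} K(τ(y x⁻¹)·x, x·y⁻¹), induces a unitary operator (a surjective linear isometry) of L²(G×G, m⊗m) onto itself, whose inverse is induced by L ↦ [(x,y) ↦ Δ(y⁻¹·τ(y⁻¹)⁻¹·x)^{1/2} L(τ(y⁻¹)⁻¹·x, y⁻¹·τ(y⁻¹)⁻¹·x)]. -/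
open MeasureTheory ENNReal

set_option linter.unusedSectionVars false

namespace CtauProof

variable {G : Type*} [Group G] [TopologicalSpace G] [IsTopologicalGroup G]
    [LocallyCompactSpace G] [SecondCountableTopology G] [T2Space G]
    [MeasurableSpace G] [BorelSpace G]
    (m : Measure G) [m.IsHaarMeasure]
    (Δ : G → ℝ) (hΔpos : ∀ x, 0 < Δ x) (hΔcont : Continuous Δ)
    (hΔ : ∀ x : G, Measure.map (fun y => y * x) m = ENNReal.ofReal (Δ x)⁻¹ • m)

include hΔpos hΔ

lemma lint_right (f : G → ℝ≥0∞) (hf : Measurable f) (x : G) :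
    ∫⁻ y, f (y * x) ∂m = ENNReal.ofReal (Δ x)⁻¹ * ∫⁻ y, f y ∂m := by
  rw [← lintegral_map hf (measurable_mul_const x), hΔ, lintegral_smul_measure, smul_eq_mul]

lemma Δmul (x y : G) : Δ (x * y) = Δ x * Δ y := by
  obtain ⟨K, hK, h1K⟩ := exists_compact_mem_nhds (1 : G)
  have h0 : m K ≠ 0 := by
    refine (lt_of_lt_of_le ?_ (measure_mono interior_subset)).ne'
    exact isOpen_interior.measure_pos m ⟨1, mem_interior_iff_mem_nhds.2 h1K⟩
  have hfin : m K ≠ ⊤ := hK.measure_lt_top.ne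
  have h2 : Measure.map (fun g => g * (x * y)) m
      = ENNReal.ofReal (Δ y)⁻¹ • (ENNReal.ofReal (Δ x)⁻¹ • m) := by
    have hco : (fun g : G => g * (x * y)) = (fun g => g * y) ∘ (fun g => g * x) := by
      funext g; simp [mul_assoc]
    rw [hco, ← Measure.map_map (measurable_mul_const y) (measurable_mul_const x), hΔ,
      Measure.map_smul, hΔ]
    exact smul_comm _ _ _
  rw [hΔ (x * y)] at h2
  have h3 := congrArg (fun μ : Measure G => μ K) h2
  simp only [Measure.smul_apply, smul_eq_mul, ← mul_assoc] at h3
  have h4 : ENNReal.ofReal (Δ (x * y))⁻¹ = ENNReal.ofReal (Δ y)⁻¹ * ENNReal.ofReal (Δ x)⁻¹ :=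
    (ENNReal.mul_left_inj h0 hfin).1 h3
  rw [← ENNReal.ofReal_mul (inv_nonneg.2 (hΔpos y).le)] at h4
  have := hΔpos x; have := hΔpos y; have := hΔpos (x * y)
  have h5 : (Δ (x * y))⁻¹ = (Δ y)⁻¹ * (Δ x)⁻¹ := by
    rw [ENNReal.ofReal_eq_ofReal_iff (by positivity) (by positivity)] at h4
    exact h4
  field_simp at h5
  nlinarith [h5]

lemma Δone : Δ 1 = 1 := by
  have h := Δmul m Δ hΔpos hΔ 1 1
  rw [one_mul] at h
  have := hΔpos 1
  nlinarith

lemma Δinv (x : G) : Δ x⁻¹ = (Δ x)⁻¹ := by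
  have h := Δmul m Δ hΔpos hΔ x⁻¹ x
  rw [inv_mul_cancel, Δone m Δ hΔpos hΔ] at h
  exact eq_inv_of_mul_eq_one_left h.symm

lemma ED_cancel (x : G) : ENNReal.ofReal (Δ x) * ENNReal.ofReal (Δ x)⁻¹ = 1 := by
  rw [← ENNReal.ofReal_mul (hΔpos x).le, mul_inv_cancel₀ (hΔpos x).ne', ENNReal.ofReal_one]

lemma DE_cancel (x : G) : ENNReal.ofReal (Δ x)⁻¹ * ENNReal.ofReal (Δ x) = 1 := by
  rw [mul_comm]; exact ED_cancel m Δ hΔpos hΔ x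

omit hΔpos hΔ
include hΔcont

lemma Dmeas : Measurable fun x : G => ENNReal.ofReal (Δ x)⁻¹ :=
  (hΔcont.measurable.inv).ennreal_ofReal

lemma Emeas : Measurable fun x : G => ENNReal.ofReal (Δ x) :=
  hΔcont.measurable.ennreal_ofReal

omit hΔcont
include hΔpos hΔcont hΔ

/-- The density `D = ofReal ∘ Δ⁻¹` satisfies a product rule. -/
lemma Dmul (x y : G) : ENNReal.ofReal (Δ (x * y))⁻¹
    = ENNReal.ofReal (Δ x)⁻¹ * ENNReal.ofReal (Δ y)⁻¹ := by
  rw [← ENNReal.ofReal_mul (inv_nonneg.2 (hΔpos x).le), Δmul m Δ hΔpos hΔ x y,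
    mul_inv]

/-- `ρ = m.withDensity D` is right invariant. -/
lemma rho_lint (f : G → ℝ≥0∞) (hf : Measurable f) (x : G) :
    ∫⁻ y, f (y * x) * ENNReal.ofReal (Δ y)⁻¹ ∂m
      = ∫⁻ y, f y * ENNReal.ofReal (Δ y)⁻¹ ∂m := by
  have step : ∀ y : G, f (y * x) * ENNReal.ofReal (Δ y)⁻¹
      = ((fun z => f z * ENNReal.ofReal (Δ z)⁻¹ * ENNReal.ofReal (Δ x)) (y * x)) := by
    intro y
    have hD : ENNReal.ofReal (Δ y)⁻¹
        = ENNReal.ofReal (Δ (y * x))⁻¹ * ENNReal.ofReal (Δ x) := by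
      rw [Dmul m Δ hΔpos hΔcont hΔ y x, mul_assoc, DE_cancel m Δ hΔpos hΔ x, mul_one]
    simp only [hD, ← mul_assoc]
  have hm1 : Measurable fun z => f z * ENNReal.ofReal (Δ z)⁻¹ :=
    hf.mul (Dmeas Δ hΔcont)
  have hm2 : Measurable fun z => f z * ENNReal.ofReal (Δ z)⁻¹ * ENNReal.ofReal (Δ x) :=
    hm1.mul_const _
  calc ∫⁻ y, f (y * x) * ENNReal.ofReal (Δ y)⁻¹ ∂m
      = ∫⁻ y, (fun z => f z * ENNReal.ofReal (Δ z)⁻¹ * ENNReal.ofReal (Δ x)) (y * x) ∂m :=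
        lintegral_congr step
    _ = ENNReal.ofReal (Δ x)⁻¹
        * ∫⁻ z, f z * ENNReal.ofReal (Δ z)⁻¹ * ENNReal.ofReal (Δ x) ∂m :=
        lint_right m Δ hΔpos hΔ _ hm2 x
    _ = ∫⁻ y, f y * ENNReal.ofReal (Δ y)⁻¹ ∂m := by
        rw [lintegral_mul_const _ hm1, mul_comm (ENNReal.ofReal (Δ x)⁻¹), mul_assoc,
          ED_cancel m Δ hΔpos hΔ x, mul_one]

/-- The measure `ρ = m.withDensity D`. -/
noncomputable def rho : Measure G := m.withDensity (fun x => ENNReal.ofReal (Δ x)⁻¹)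

lemma rho_lintegral (f : G → ℝ≥0∞) (hf : Measurable f) :
    ∫⁻ y, f y ∂(rho m Δ) = ∫⁻ y, f y * ENNReal.ofReal (Δ y)⁻¹ ∂m := by
  rw [rho, lintegral_withDensity_eq_lintegral_mul m (Dmeas Δ hΔcont) hf]
  simp only [Pi.mul_apply, mul_comm]

lemma rho_right_invariant : (rho m Δ).IsMulRightInvariant := by
  constructor
  intro g
  refine Measure.ext fun s hs => ?_
  rw [Measure.map_apply (measurable_mul_const g) hs]
  have h1 : ∀ t : Set G, MeasurableSet t →
      (rho m Δ) t = ∫⁻ y, t.indicator (1 : G → ℝ≥0∞) y * ENNReal.ofReal (Δ y)⁻¹ ∂m := by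
    intro t ht
    rw [show (rho m Δ) t = ∫⁻ y, t.indicator 1 y ∂(rho m Δ) by
      rw [lintegral_indicator_one ht],
      rho_lintegral m Δ hΔpos hΔcont hΔ _ (measurable_one.indicator ht)]
  rw [h1 _ (hs.preimage (measurable_mul_const g)), h1 _ hs]
  have h2 : ∀ y : G, ((fun x => x * g) ⁻¹' s).indicator (1 : G → ℝ≥0∞) y
      = s.indicator (1 : G → ℝ≥0∞) (y * g) := by
    intro y
    by_cases h : y * g ∈ s <;> simp [Set.indicator_apply, h]
  simp only [h2]
  exact rho_lint m Δ hΔpos hΔcont hΔ _ (measurable_one.indicator hs) g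

/-- The measure `ν = ρ.inv`. -/
noncomputable def nu : Measure G := (rho m Δ).inv

lemma nu_left_invariant : (nu m Δ).IsMulLeftInvariant := by
  haveI := rho_right_invariant m Δ hΔpos hΔcont hΔ
  rw [nu]; infer_instance

lemma nu_finite_on_compacts : IsFiniteMeasureOnCompacts (nu m Δ) := by
  constructor
  intro K hK
  rw [nu, Measure.inv_apply]
  have hKi : IsCompact K⁻¹ := hK.inv
  obtain ⟨C, hC⟩ := hKi.exists_bound_of_continuousOn
    ((hΔcont.inv₀ (fun x => (hΔpos x).ne')).continuousOn)
  have hDb : ∀ x ∈ K⁻¹, ENNReal.ofReal (Δ x)⁻¹ ≤ ENNReal.ofReal C := fun x hx =>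
    ENNReal.ofReal_le_ofReal ((le_abs_self _).trans ((Real.norm_eq_abs _) ▸ hC x hx))
  have : (rho m Δ) K⁻¹ ≤ ENNReal.ofReal C * m K⁻¹ := by
    rw [rho, withDensity_apply _ hKi.isClosed.measurableSet]
    calc ∫⁻ x in K⁻¹, ENNReal.ofReal (Δ x)⁻¹ ∂m
        ≤ ∫⁻ _ in K⁻¹, ENNReal.ofReal C ∂m := setLIntegral_mono (by measurability) hDb
      _ = ENNReal.ofReal C * m K⁻¹ := by rw [setLIntegral_const]
  exact lt_of_le_of_lt this (ENNReal.mul_lt_top ENNReal.ofReal_lt_top hKi.measure_lt_top)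


lemma nu_lintegral (f : G → ℝ≥0∞) (hf : Measurable f) :
    ∫⁻ x, f x ∂(nu m Δ) = ∫⁻ x, f x⁻¹ * ENNReal.ofReal (Δ x)⁻¹ ∂m := by
  rw [nu, Measure.inv, lintegral_map hf measurable_inv,
    rho_lintegral m Δ hΔpos hΔcont hΔ (fun x => f x⁻¹) (hf.comp measurable_inv)]

lemma nu_eq : nu m Δ = m := by
  haveI := nu_left_invariant m Δ hΔpos hΔcont hΔ
  haveI := nu_finite_on_compacts m Δ hΔpos hΔcont hΔ
  have hc := Measure.isMulLeftInvariant_eq_smul (nu m Δ) m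
  set c := Measure.haarScalarFactor (nu m Δ) m with hcdef
  suffices h : c = 1 by rw [hc, h, one_smul]
  -- key identity: for every measurable `f`, `∫ f(x⁻¹) D x ∂m = c * ∫ f ∂m`
  have key : ∀ f : G → ℝ≥0∞, Measurable f →
      ∫⁻ x, f x⁻¹ * ENNReal.ofReal (Δ x)⁻¹ ∂m = (c : ℝ≥0∞) * ∫⁻ x, f x ∂m := by
    intro f hf
    rw [← nu_lintegral m Δ hΔpos hΔcont hΔ f hf, hc]
    rw [lintegral_smul_measure, ENNReal.smul_def, smul_eq_mul]
  -- bounds via small symmetric compact neighborhoods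
  have bounds : ∀ ε : ℝ, 0 < ε → ε < 1 →
      ENNReal.ofReal (1 - ε) ≤ (c : ℝ≥0∞) ∧ (c : ℝ≥0∞) ≤ ENNReal.ofReal (1 + ε) := by
    intro ε hε hε1
    have hUopen : IsOpen {x : G | (Δ x)⁻¹ ∈ Set.Ioo (1 - ε) (1 + ε)} :=
      IsOpen.preimage (hΔcont.inv₀ fun x => (hΔpos x).ne') isOpen_Ioo
    have h1U : (1 : G) ∈ {x : G | (Δ x)⁻¹ ∈ Set.Ioo (1 - ε) (1 + ε)} := by
      simp only [Set.mem_setOf_eq, Δone m Δ hΔpos hΔ, inv_one, Set.mem_Ioo]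
      constructor <;> linarith
    obtain ⟨K, hKc, h1K, hKU⟩ := exists_compact_subset hUopen h1U
    set V : Set G := K ∩ K⁻¹ with hVdef
    have hVc : IsCompact V := hKc.inter_right hKc.inv.isClosed
    have hVm : MeasurableSet V := hVc.isClosed.measurableSet
    have h1V : (1 : G) ∈ interior V := by
      rw [hVdef, interior_inter]
      refine ⟨h1K, ?_⟩
      have : (interior K)⁻¹ ⊆ interior K⁻¹ :=
        interior_maximal (Set.inv_subset_inv.2 interior_subset) isOpen_interior.inv
      exact this (by simpa using h1K)
    have hV0 : m V ≠ 0 :=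
      ((isOpen_interior.measure_pos m ⟨1, h1V⟩).trans_le (measure_mono interior_subset)).ne'
    have hVt : m V ≠ ⊤ := hVc.measure_lt_top.ne
    have hVsym : ∀ x : G, x⁻¹ ∈ V ↔ x ∈ V := by
      intro x
      simp only [hVdef, Set.mem_inter_iff, Set.mem_inv, inv_inv]
      tauto
    have hkey := key (V.indicator 1) (measurable_one.indicator hVm)
    rw [lintegral_indicator_one hVm] at hkey
    have hlhs : ∫⁻ x, V.indicator (1 : G → ℝ≥0∞) x⁻¹ * ENNReal.ofReal (Δ x)⁻¹ ∂m
        = ∫⁻ x in V, ENNReal.ofReal (Δ x)⁻¹ ∂m := by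
      rw [← lintegral_indicator hVm]
      refine lintegral_congr fun x => ?_
      by_cases h : x ∈ V
      · have h2 : x⁻¹ ∈ V := (hVsym x).2 h
        simp [Set.indicator_of_mem h2, Set.indicator_of_mem h]
      · have h2 : x⁻¹ ∉ V := fun hh => h ((hVsym x).1 hh)
        simp [Set.indicator_of_notMem h2, Set.indicator_of_notMem h]
    rw [hlhs] at hkey
    have hDbound : ∀ x ∈ V, (Δ x)⁻¹ ∈ Set.Ioo (1 - ε) (1 + ε) := fun x hx =>
      hKU hx.1
    constructor
    · have hlow : ENNReal.ofReal (1 - ε) * m V ≤ (c : ℝ≥0∞) * m V := by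
        rw [← hkey]
        calc ENNReal.ofReal (1 - ε) * m V = ∫⁻ _ in V, ENNReal.ofReal (1 - ε) ∂m := by
              rw [setLIntegral_const]
          _ ≤ ∫⁻ x in V, ENNReal.ofReal (Δ x)⁻¹ ∂m :=
              setLIntegral_mono (Dmeas Δ hΔcont) fun x hx =>
                ENNReal.ofReal_le_ofReal (hDbound x hx).1.le
      exact (ENNReal.mul_le_mul_iff_left hV0 hVt).1 hlow
    · have hhigh : (c : ℝ≥0∞) * m V ≤ ENNReal.ofReal (1 + ε) * m V := by
        rw [← hkey]
        calc ∫⁻ x in V, ENNReal.ofReal (Δ x)⁻¹ ∂m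
            ≤ ∫⁻ _ in V, ENNReal.ofReal (1 + ε) ∂m :=
              setLIntegral_mono measurable_const fun x hx =>
                ENNReal.ofReal_le_ofReal (hDbound x hx).2.le
          _ = ENNReal.ofReal (1 + ε) * m V := by rw [setLIntegral_const]
      exact (ENNReal.mul_le_mul_iff_left hV0 hVt).1 hhigh
  -- convert to the reals and finish
  have hreal : ∀ ε : ℝ, 0 < ε → ε < 1 → |(c : ℝ) - 1| ≤ ε := by
    intro ε hε hε1
    obtain ⟨hlo, hhi⟩ := bounds ε hε hε1
    rw [← ENNReal.ofReal_coe_nnreal] at hlo hhi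
    have h1 : 1 - ε ≤ (c : ℝ) :=
      (ENNReal.ofReal_le_ofReal_iff (by positivity)).1 hlo
    have h2 : (c : ℝ) ≤ 1 + ε :=
      (ENNReal.ofReal_le_ofReal_iff (by linarith)).1 hhi
    rw [abs_le]; constructor <;> linarith
  have : |(c : ℝ) - 1| = 0 := by
    by_contra h
    have habs : 0 < |(c : ℝ) - 1| := lt_of_le_of_ne (abs_nonneg _) (Ne.symm h)
    have := hreal (min (|(c : ℝ) - 1| / 2) (1 / 2))
      (lt_min (by linarith) (by norm_num)) (lt_of_le_of_lt (min_le_right _ _) (by norm_num))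
    have hm := min_le_left (|(c : ℝ) - 1| / 2) (1 / 2)
    linarith
  have : (c : ℝ) = 1 := by
    have := abs_eq_zero.1 this; linarith
  exact NNReal.coe_injective (by simpa using this)

/-- The inversion formula: `∫ f(x⁻¹) dm = ∫ f(x) Δ(x)⁻¹ dm`. -/
lemma lintegral_inv_weight (f : G → ℝ≥0∞) (hf : Measurable f) :
    ∫⁻ x, f x⁻¹ ∂m = ∫⁻ x, f x * ENNReal.ofReal (Δ x)⁻¹ ∂m := by
  have h := nu_lintegral m Δ hΔpos hΔcont hΔ (fun x => f x⁻¹) (hf.comp measurable_inv)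
  rw [nu_eq m Δ hΔpos hΔcont hΔ] at h
  simpa using h


/-! ### The product-space transformation -/

variable (τ : G → G) (hτ : Measurable τ)

/-- The transformation `T(x,y) = (τ(y x⁻¹) x, x y⁻¹)`. -/
def Tmap : G × G → G × G := fun p => (τ (p.2 * p.1⁻¹) * p.1, p.1 * p.2⁻¹)

/-- The inverse transformation `S(x,y) = (τ(y⁻¹)⁻¹ x, y⁻¹ τ(y⁻¹)⁻¹ x)`. -/
def Smap : G × G → G × G := fun p => ((τ p.2⁻¹)⁻¹ * p.1, p.2⁻¹ * (τ p.2⁻¹)⁻¹ * p.1)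

omit hΔpos hΔcont hΔ

lemma ST_eq (p : G × G) : Smap τ (Tmap τ p) = p := by
  obtain ⟨x, y⟩ := p
  simp only [Tmap, Smap, mul_inv_rev, inv_inv, Prod.mk.injEq]
  constructor <;> group

lemma TS_eq (p : G × G) : Tmap τ (Smap τ p) = p := by
  obtain ⟨x, y⟩ := p
  have harg : (y⁻¹ * (τ y⁻¹)⁻¹ * x) * ((τ y⁻¹)⁻¹ * x)⁻¹ = y⁻¹ := by group
  simp only [Tmap, Smap]
  rw [harg]
  simp only [Prod.mk.injEq]
  constructor <;> group

include hτ

lemma Tmeas : Measurable (Tmap τ) :=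
  ((hτ.comp (measurable_snd.mul measurable_fst.inv)).mul measurable_fst).prod
    (measurable_fst.mul measurable_snd.inv)

lemma Smeas : Measurable (Smap τ) :=
  ((hτ.comp measurable_snd.inv).inv.mul measurable_fst).prod
    ((measurable_snd.inv.mul (hτ.comp measurable_snd.inv).inv).mul measurable_fst)

include hΔpos hΔcont hΔ

lemma keyT (f : G × G → ℝ≥0∞) (hf : Measurable f) :
    ∫⁻ p, f (Tmap τ p) * ENNReal.ofReal (Δ p.2)⁻¹ ∂(m.prod m)
      = ∫⁻ p, f p ∂(m.prod m) := by
  have hT := Tmeas τ hτ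
  have hint : Measurable fun p : G × G => f (Tmap τ p) * ENNReal.ofReal (Δ p.2)⁻¹ :=
    (hf.comp hT).mul ((Dmeas Δ hΔcont).comp measurable_snd)
  rw [lintegral_prod _ hint.aemeasurable, lintegral_prod _ hf.aemeasurable]
  have inner : ∀ x : G, (∫⁻ y, f (Tmap τ (x, y)) * ENNReal.ofReal (Δ y)⁻¹ ∂m)
      = ∫⁻ v, f (τ v⁻¹ * x, v) ∂m := by
    intro x
    have hpair : Measurable fun z : G => (τ (x * z)⁻¹ * x, x * z) :=
      ((hτ.comp ((measurable_const.mul measurable_id).inv)).mul measurable_const).prod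
        (measurable_const.mul measurable_id)
    have hHmeas : Measurable fun z : G =>
        f (τ (x * z)⁻¹ * x, x * z) * ENNReal.ofReal (Δ z) :=
      (hf.comp hpair).mul (Emeas Δ hΔcont)
    have step1 : ∀ y : G, f (Tmap τ (x, y)) * ENNReal.ofReal (Δ y)⁻¹
        = (fun z => f (τ (x * z)⁻¹ * x, x * z) * ENNReal.ofReal (Δ z)) y⁻¹ := by
      intro y
      simp only [Tmap, mul_inv_rev, inv_inv, Δinv m Δ hΔpos hΔ y]
    calc (∫⁻ y, f (Tmap τ (x, y)) * ENNReal.ofReal (Δ y)⁻¹ ∂m)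
        = ∫⁻ y, (fun z => f (τ (x * z)⁻¹ * x, x * z) * ENNReal.ofReal (Δ z)) y⁻¹ ∂m :=
          lintegral_congr step1
      _ = ∫⁻ z, f (τ (x * z)⁻¹ * x, x * z) * ENNReal.ofReal (Δ z)
            * ENNReal.ofReal (Δ z)⁻¹ ∂m :=
          lintegral_inv_weight m Δ hΔpos hΔcont hΔ _ hHmeas
      _ = ∫⁻ z, f (τ (x * z)⁻¹ * x, x * z) ∂m :=
          lintegral_congr fun z => by
            rw [mul_assoc, ED_cancel m Δ hΔpos hΔ z, mul_one]
      _ = ∫⁻ v, f (τ v⁻¹ * x, v) ∂m :=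
          lintegral_mul_left_eq_self (fun v => f (τ v⁻¹ * x, v)) x
  simp only [inner]
  have hswap : AEMeasurable (Function.uncurry fun x v => f (τ v⁻¹ * x, v)) (m.prod m) := by
    apply Measurable.aemeasurable
    exact hf.comp (((hτ.comp measurable_snd.inv).mul measurable_fst).prod measurable_snd)
  rw [lintegral_lintegral_swap hswap]
  have inner2 : ∀ v : G, (∫⁻ x, f (τ v⁻¹ * x, v) ∂m) = ∫⁻ x, f (x, v) ∂m := fun v =>
    lintegral_mul_left_eq_self (fun x => f (x, v)) (τ v⁻¹)
  simp only [inner2]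
  exact (lintegral_lintegral_swap (by exact hf.aemeasurable)).symm

lemma keyS (f : G × G → ℝ≥0∞) (hf : Measurable f) :
    ∫⁻ p, f (Smap τ p) ∂(m.prod m)
      = ∫⁻ p, f p * ENNReal.ofReal (Δ p.2)⁻¹ ∂(m.prod m) := by
  have h := keyT m Δ hΔpos hΔcont hΔ τ hτ (f ∘ Smap τ) (hf.comp (Smeas τ hτ))
  simp only [Function.comp_apply, ST_eq] at h
  exact h.symm

lemma keyT' (f : G × G → ℝ≥0∞) (hf : Measurable f) :
    ∫⁻ p, f (Tmap τ p) ∂(m.prod m)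
      = ∫⁻ p, f p * ENNReal.ofReal (Δ ((Smap τ p).2)) ∂(m.prod m) := by
  have hg : Measurable fun p : G × G => f p * ENNReal.ofReal (Δ ((Smap τ p).2)) :=
    hf.mul ((Emeas Δ hΔcont).comp (measurable_snd.comp (Smeas τ hτ)))
  have h := keyT m Δ hΔpos hΔcont hΔ τ hτ _ hg
  rw [← h]
  refine lintegral_congr fun p => ?_
  rw [ST_eq, mul_assoc, ED_cancel m Δ hΔpos hΔ p.2, mul_one]

lemma nullT (N : Set (G × G)) (hN : MeasurableSet N) (hN0 : (m.prod m) N = 0) :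
    (m.prod m) (Tmap τ ⁻¹' N) = 0 := by
  have h1 : (m.prod m) (Tmap τ ⁻¹' N)
      = ∫⁻ p, N.indicator (1 : G × G → ℝ≥0∞) (Tmap τ p) ∂(m.prod m) := by
    rw [← lintegral_indicator_one (hN.preimage (Tmeas τ hτ))]
    exact lintegral_congr fun p => by
      by_cases h : Tmap τ p ∈ N <;>
        simp [Set.indicator_apply, h, Set.mem_preimage]
  rw [h1, keyT' m Δ hΔpos hΔcont hΔ τ hτ _ (measurable_one.indicator hN)]
  have h2 : ∀ p : G × G, N.indicator (1 : G × G → ℝ≥0∞) p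
      * ENNReal.ofReal (Δ ((Smap τ p).2))
      = N.indicator (fun q => ENNReal.ofReal (Δ ((Smap τ q).2))) p := by
    intro p
    by_cases h : p ∈ N <;> simp [Set.indicator_apply, h]
  simp only [h2]
  rw [lintegral_indicator hN]
  exact setLIntegral_measure_zero _ _ hN0

lemma nullS (N : Set (G × G)) (hN : MeasurableSet N) (hN0 : (m.prod m) N = 0) :
    (m.prod m) (Smap τ ⁻¹' N) = 0 := by
  have h1 : (m.prod m) (Smap τ ⁻¹' N)
      = ∫⁻ p, N.indicator (1 : G × G → ℝ≥0∞) (Smap τ p) ∂(m.prod m) := by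
    rw [← lintegral_indicator_one (hN.preimage (Smeas τ hτ))]
    exact lintegral_congr fun p => by
      by_cases h : Smap τ p ∈ N <;>
        simp [Set.indicator_apply, h, Set.mem_preimage]
  rw [h1, keyS m Δ hΔpos hΔcont hΔ τ hτ _ (measurable_one.indicator hN)]
  have h2 : ∀ p : G × G, N.indicator (1 : G × G → ℝ≥0∞) p * ENNReal.ofReal (Δ p.2)⁻¹
      = N.indicator (fun q => ENNReal.ofReal (Δ q.2)⁻¹) p := by
    intro p
    by_cases h : p ∈ N <;> simp [Set.indicator_apply, h]
  simp only [h2]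
  rw [lintegral_indicator hN]
  exact setLIntegral_measure_zero _ _ hN0

lemma aeT {β : Type*} {f g : G × G → β} (h : f =ᵐ[m.prod m] g) :
    (fun p => f (Tmap τ p)) =ᵐ[m.prod m] fun p => g (Tmap τ p) := by
  have hnull : (m.prod m) {p | f p ≠ g p} = 0 := h
  obtain ⟨N, hsub, hNm, hN0⟩ := exists_measurable_superset_of_null hnull
  refine measure_mono_null ?_ (nullT m Δ hΔpos hΔcont hΔ τ hτ N hNm hN0)
  intro p hp
  exact hsub hp

lemma aeS {β : Type*} {f g : G × G → β} (h : f =ᵐ[m.prod m] g) :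
    (fun p => f (Smap τ p)) =ᵐ[m.prod m] fun p => g (Smap τ p) := by
  have hnull : (m.prod m) {p | f p ≠ g p} = 0 := h
  obtain ⟨N, hsub, hNm, hN0⟩ := exists_measurable_superset_of_null hnull
  refine measure_mono_null ?_ (nullS m Δ hΔpos hΔcont hΔ τ hτ N hNm hN0)
  intro p hp
  exact hsub hp


/-! ### The maps on functions -/

/-- The map `K ↦ Δ(y)^{-1/2} K(T(x,y))`. -/
noncomputable def Ufun (f : G × G → ℂ) : G × G → ℂ :=
  fun p => (Real.sqrt (Δ p.2))⁻¹ • f (Tmap τ p)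

/-- The map `L ↦ Δ(S(x,y)_2)^{1/2} L(S(x,y))`. -/
noncomputable def Vfun (f : G × G → ℂ) : G × G → ℂ :=
  fun p => Real.sqrt (Δ ((Smap τ p).2)) • f (Smap τ p)

omit hτ hΔcont hΔ

lemma UVfun (f : G × G → ℂ) : Ufun Δ τ (Vfun Δ τ f) = f := by
  funext p
  simp only [Ufun, Vfun, ST_eq, smul_smul]
  rw [inv_mul_cancel₀ (Real.sqrt_pos.2 (hΔpos p.2)).ne', one_smul]

lemma VUfun (f : G × G → ℂ) : Vfun Δ τ (Ufun Δ τ f) = f := by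
  funext p
  simp only [Ufun, Vfun, TS_eq, smul_smul]
  rw [mul_inv_cancel₀ (Real.sqrt_pos.2 (hΔpos ((Smap τ p).2))).ne', one_smul]

omit hΔpos
include hΔcont hτ

lemma Umeas (f : G × G → ℂ) (hf : Measurable f) : Measurable (Ufun Δ τ f) :=
  (((Real.continuous_sqrt.comp (hΔcont.comp continuous_snd)).measurable).inv).smul
    (hf.comp (Tmeas τ hτ))

lemma Vmeas (f : G × G → ℂ) (hf : Measurable f) : Measurable (Vfun Δ τ f) :=
  ((Real.continuous_sqrt.measurable.comp
      (hΔcont.measurable.comp (measurable_snd.comp (Smeas τ hτ))))).smul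
    (hf.comp (Smeas τ hτ))

include hΔpos hΔ

lemma aeU {f g : G × G → ℂ} (h : f =ᵐ[m.prod m] g) :
    Ufun Δ τ f =ᵐ[m.prod m] Ufun Δ τ g := by
  filter_upwards [aeT m Δ hΔpos hΔcont hΔ τ hτ h] with p hp
  simp only [Ufun, hp]

lemma aeV {f g : G × G → ℂ} (h : f =ᵐ[m.prod m] g) :
    Vfun Δ τ f =ᵐ[m.prod m] Vfun Δ τ g := by
  filter_upwards [aeS m Δ hΔpos hΔcont hΔ τ hτ h] with p hp
  simp only [Vfun, hp]

lemma aesmU (f : G × G → ℂ) (hf : AEStronglyMeasurable f (m.prod m)) :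
    AEStronglyMeasurable (Ufun Δ τ f) (m.prod m) :=
  ⟨Ufun Δ τ hf.mk,
    (Umeas Δ hΔcont τ hτ _ hf.stronglyMeasurable_mk.measurable).stronglyMeasurable,
    aeU m Δ hΔpos hΔcont hΔ τ hτ hf.ae_eq_mk⟩

lemma aesmV (f : G × G → ℂ) (hf : AEStronglyMeasurable f (m.prod m)) :
    AEStronglyMeasurable (Vfun Δ τ f) (m.prod m) :=
  ⟨Vfun Δ τ hf.mk,
    (Vmeas Δ hΔcont τ hτ _ hf.stronglyMeasurable_mk.measurable).stronglyMeasurable,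
    aeV m Δ hΔpos hΔcont hΔ τ hτ hf.ae_eq_mk⟩

omit hτ hΔcont hΔ

lemma pointU (y : G) (z : ℂ) :
    ((‖(Real.sqrt (Δ y))⁻¹ • z‖₊ : ℝ≥0∞)) ^ (2 : ℝ)
      = (‖z‖₊ : ℝ≥0∞) ^ (2 : ℝ) * ENNReal.ofReal (Δ y)⁻¹ := by
  have hd := hΔpos y
  have hr : (0:ℝ) ≤ (Real.sqrt (Δ y))⁻¹ := inv_nonneg.2 (Real.sqrt_nonneg _)
  rw [nnnorm_smul, ENNReal.coe_mul,
    ENNReal.mul_rpow_of_nonneg _ _ (by norm_num : (0:ℝ) ≤ 2), mul_comm]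
  congr 1
  rw [← enorm_eq_nnnorm, Real.enorm_eq_ofReal_abs, abs_of_nonneg hr,
    ENNReal.ofReal_rpow_of_nonneg hr (by norm_num : (0:ℝ) ≤ 2)]
  congr 1
  rw [Real.rpow_two, inv_pow, Real.sq_sqrt hd.le]

lemma pointV (y : G) (z : ℂ) :
    ((‖Real.sqrt (Δ y) • z‖₊ : ℝ≥0∞)) ^ (2 : ℝ)
      = ENNReal.ofReal (Δ y) * (‖z‖₊ : ℝ≥0∞) ^ (2 : ℝ) := by
  have hd := hΔpos y
  rw [nnnorm_smul, ENNReal.coe_mul,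
    ENNReal.mul_rpow_of_nonneg _ _ (by norm_num : (0:ℝ) ≤ 2)]
  congr 1
  rw [← enorm_eq_nnnorm, Real.enorm_eq_ofReal_abs, abs_of_nonneg (Real.sqrt_nonneg _),
    ENNReal.ofReal_rpow_of_nonneg (Real.sqrt_nonneg _) (by norm_num : (0:ℝ) ≤ 2)]
  congr 1
  rw [Real.rpow_two, Real.sq_sqrt hd.le]

include hΔcont hΔ hτ

lemma eLpNormU (f : G × G → ℂ) (hf : AEStronglyMeasurable f (m.prod m)) :
    eLpNorm (Ufun Δ τ f) 2 (m.prod m) = eLpNorm f 2 (m.prod m) := by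
  rw [eLpNorm_congr_ae (aeU m Δ hΔpos hΔcont hΔ τ hτ hf.ae_eq_mk),
    eLpNorm_congr_ae hf.ae_eq_mk]
  set g := hf.mk with hgdef
  have hg : Measurable g := hf.stronglyMeasurable_mk.measurable
  rw [eLpNorm_eq_lintegral_rpow_enorm_toReal two_ne_zero ENNReal.ofNat_ne_top,
    eLpNorm_eq_lintegral_rpow_enorm_toReal two_ne_zero ENNReal.ofNat_ne_top]
  simp only [enorm_eq_nnnorm]
  congr 1
  have htr : (2 : ℝ≥0∞).toReal = (2 : ℝ) := by norm_num
  rw [htr]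
  have hmeas : Measurable fun q : G × G => (‖g q‖₊ : ℝ≥0∞) ^ (2 : ℝ) :=
    hg.nnnorm.coe_nnreal_ennreal.pow_const _
  calc ∫⁻ p, (‖Ufun Δ τ g p‖₊ : ℝ≥0∞) ^ (2:ℝ) ∂(m.prod m)
      = ∫⁻ p, (fun q => (‖g q‖₊ : ℝ≥0∞) ^ (2:ℝ)) (Tmap τ p)
          * ENNReal.ofReal (Δ p.2)⁻¹ ∂(m.prod m) :=
        lintegral_congr fun p => pointU Δ hΔpos p.2 (g (Tmap τ p))
    _ = ∫⁻ p, (‖g p‖₊ : ℝ≥0∞) ^ (2:ℝ) ∂(m.prod m) :=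
        keyT m Δ hΔpos hΔcont hΔ τ hτ _ hmeas

lemma eLpNormV (f : G × G → ℂ) (hf : AEStronglyMeasurable f (m.prod m)) :
    eLpNorm (Vfun Δ τ f) 2 (m.prod m) = eLpNorm f 2 (m.prod m) := by
  rw [eLpNorm_congr_ae (aeV m Δ hΔpos hΔcont hΔ τ hτ hf.ae_eq_mk),
    eLpNorm_congr_ae hf.ae_eq_mk]
  set g := hf.mk with hgdef
  have hg : Measurable g := hf.stronglyMeasurable_mk.measurable
  rw [eLpNorm_eq_lintegral_rpow_enorm_toReal two_ne_zero ENNReal.ofNat_ne_top,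
    eLpNorm_eq_lintegral_rpow_enorm_toReal two_ne_zero ENNReal.ofNat_ne_top]
  simp only [enorm_eq_nnnorm]
  congr 1
  have htr : (2 : ℝ≥0∞).toReal = (2 : ℝ) := by norm_num
  rw [htr]
  have hmeas : Measurable fun q : G × G =>
      ENNReal.ofReal (Δ q.2) * (‖g q‖₊ : ℝ≥0∞) ^ (2 : ℝ) :=
    ((Emeas Δ hΔcont).comp measurable_snd).mul (hg.nnnorm.coe_nnreal_ennreal.pow_const _)
  calc ∫⁻ p, (‖Vfun Δ τ g p‖₊ : ℝ≥0∞) ^ (2:ℝ) ∂(m.prod m)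
      = ∫⁻ p, (fun q => ENNReal.ofReal (Δ q.2)
          * (‖g q‖₊ : ℝ≥0∞) ^ (2:ℝ)) (Smap τ p) ∂(m.prod m) :=
        lintegral_congr fun p => pointV Δ hΔpos ((Smap τ p).2) (g (Smap τ p))
    _ = ∫⁻ p, (ENNReal.ofReal (Δ p.2) * (‖g p‖₊ : ℝ≥0∞) ^ (2:ℝ))
          * ENNReal.ofReal (Δ p.2)⁻¹ ∂(m.prod m) :=
        keyS m Δ hΔpos hΔcont hΔ τ hτ _ hmeas
    _ = ∫⁻ p, (‖g p‖₊ : ℝ≥0∞) ^ (2:ℝ) ∂(m.prod m) := by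
        refine lintegral_congr fun p => ?_
        rw [mul_comm (ENNReal.ofReal (Δ p.2)), mul_assoc, ED_cancel m Δ hΔpos hΔ p.2, mul_one]

lemma memU (K : Lp ℂ 2 (m.prod m)) : MemLp (Ufun Δ τ (K : G × G → ℂ)) 2 (m.prod m) :=
  ⟨aesmU m Δ hΔpos hΔcont hΔ τ hτ _ (Lp.aestronglyMeasurable K), by
    rw [eLpNormU m Δ hΔpos hΔcont hΔ τ hτ _ (Lp.aestronglyMeasurable K)]
    exact (Lp.memLp K).2⟩

lemma memV (K : Lp ℂ 2 (m.prod m)) : MemLp (Vfun Δ τ (K : G × G → ℂ)) 2 (m.prod m) :=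
  ⟨aesmV m Δ hΔpos hΔcont hΔ τ hτ _ (Lp.aestronglyMeasurable K), by
    rw [eLpNormV m Δ hΔpos hΔcont hΔ τ hτ _ (Lp.aestronglyMeasurable K)]
    exact (Lp.memLp K).2⟩

end CtauProof

open CtauProof

/-- For a locally compact second countable Hausdorff group `G` with left Haar
measure `m` and modular function `Δ`, and a Borel measurable `τ : G → G`, the map
`K ↦ [(x,y) ↦ Δ(y)^{-1/2} K(τ(y x⁻¹)·x, x·y⁻¹)]` induces a unitary operator (a surjective
linear isometry) of `L²(G×G, m⊗m)` onto itself, whose inverse is induced by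
`L ↦ [(x,y) ↦ Δ(y⁻¹·τ(y⁻¹)⁻¹·x)^{1/2} L(τ(y⁻¹)⁻¹·x, y⁻¹·τ(y⁻¹)⁻¹·x)]`. -/
theorem ctau_unitary
    {G : Type*} [Group G] [TopologicalSpace G] [IsTopologicalGroup G]
    [LocallyCompactSpace G] [SecondCountableTopology G] [T2Space G]
    [MeasurableSpace G] [BorelSpace G]
    (m : Measure G) [m.IsHaarMeasure]
    (Δ : G → ℝ) (hΔpos : ∀ x, 0 < Δ x) (hΔcont : Continuous Δ)
    (hΔ : ∀ x : G, Measure.map (fun y => y * x) m = ENNReal.ofReal (Δ x)⁻¹ • m)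
    (τ : G → G) (hτ : Measurable τ) :
    ∃ U : Lp ℂ 2 (m.prod m) ≃ₗᵢ[ℂ] Lp ℂ 2 (m.prod m),
      (∀ K : Lp ℂ 2 (m.prod m),
        (U K : G × G → ℂ) =ᵐ[m.prod m]
          fun p => (Real.sqrt (Δ p.2))⁻¹ •
            (K : G × G → ℂ) (τ (p.2 * p.1⁻¹) * p.1, p.1 * p.2⁻¹)) ∧
      (∀ L : Lp ℂ 2 (m.prod m),
        (U.symm L : G × G → ℂ) =ᵐ[m.prod m]
          fun p => Real.sqrt (Δ (p.2⁻¹ * (τ p.2⁻¹)⁻¹ * p.1)) •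
            (L : G × G → ℂ) ((τ p.2⁻¹)⁻¹ * p.1, p.2⁻¹ * (τ p.2⁻¹)⁻¹ * p.1)) := by
  classical
  have memU' := memU m Δ hΔpos hΔcont hΔ τ hτ
  have memV' := memV m Δ hΔpos hΔcont hΔ τ hτ
  let Φ : Lp ℂ 2 (m.prod m) → Lp ℂ 2 (m.prod m) := fun K => (memU' K).toLp _
  let Ψ : Lp ℂ 2 (m.prod m) → Lp ℂ 2 (m.prod m) := fun L => (memV' L).toLp _
  have coeΦ : ∀ K, (Φ K : G × G → ℂ) =ᵐ[m.prod m] Ufun Δ τ (K : G × G → ℂ) :=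
    fun K => MemLp.coeFn_toLp _
  have coeΨ : ∀ L, (Ψ L : G × G → ℂ) =ᵐ[m.prod m] Vfun Δ τ (L : G × G → ℂ) :=
    fun L => MemLp.coeFn_toLp _
  have leftinv : ∀ K, Ψ (Φ K) = K := by
    intro K
    have h1 : Vfun Δ τ ((Φ K : G × G → ℂ)) =ᵐ[m.prod m] (K : G × G → ℂ) := by
      have h2 := aeV m Δ hΔpos hΔcont hΔ τ hτ (coeΦ K)
      rwa [VUfun Δ hΔpos τ] at h2
    exact (MemLp.toLp_congr (memV' (Φ K)) (Lp.memLp K) h1).trans (Lp.toLp_coeFn K (Lp.memLp K))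
  have rightinv : ∀ L, Φ (Ψ L) = L := by
    intro L
    have h1 : Ufun Δ τ ((Ψ L : G × G → ℂ)) =ᵐ[m.prod m] (L : G × G → ℂ) := by
      have h2 := aeU m Δ hΔpos hΔcont hΔ τ hτ (coeΨ L)
      rwa [UVfun Δ hΔpos τ] at h2
    exact (MemLp.toLp_congr (memU' (Ψ L)) (Lp.memLp L) h1).trans (Lp.toLp_coeFn L (Lp.memLp L))
  have addΦ : ∀ K L, Φ (K + L) = Φ K + Φ L := by
    intro K L
    have h1 : Ufun Δ τ ((K + L : Lp ℂ 2 (m.prod m)) : G × G → ℂ)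
        =ᵐ[m.prod m] Ufun Δ τ (K : G × G → ℂ) + Ufun Δ τ (L : G × G → ℂ) := by
      have h2 := aeU m Δ hΔpos hΔcont hΔ τ hτ (Lp.coeFn_add K L)
      refine h2.trans (Filter.Eventually.of_forall fun p => ?_)
      simp [Ufun, smul_add]
    exact (MemLp.toLp_congr (memU' (K + L)) (MemLp.add (memU' K) (memU' L)) h1).trans
      (MemLp.toLp_add _ _)
  have smulΦ : ∀ (c : ℂ) K, Φ (c • K) = c • Φ K := by
    intro c K
    have h1 : Ufun Δ τ ((c • K : Lp ℂ 2 (m.prod m)) : G × G → ℂ)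
        =ᵐ[m.prod m] c • Ufun Δ τ (K : G × G → ℂ) := by
      have h2 := aeU m Δ hΔpos hΔcont hΔ τ hτ (Lp.coeFn_smul c K)
      refine h2.trans (Filter.Eventually.of_forall fun p => ?_)
      simp only [Ufun, Pi.smul_apply, smul_eq_mul, Complex.real_smul]
      push_cast
      ring
    exact (MemLp.toLp_congr (memU' (c • K)) (MemLp.const_smul (memU' K) c) h1).trans
      (MemLp.toLp_const_smul c _)
  have normΦ : ∀ K, ‖Φ K‖ = ‖K‖ := by
    intro K
    rw [show ‖Φ K‖ = (eLpNorm (Ufun Δ τ (K : G × G → ℂ)) 2 (m.prod m)).toReal from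
      Lp.norm_toLp _ (memU' K),
      eLpNormU m Δ hΔpos hΔcont hΔ τ hτ _ (Lp.aestronglyMeasurable K), Lp.norm_def]
  let Ulin₀ : Lp ℂ 2 (m.prod m) ≃ₗ[ℂ] Lp ℂ 2 (m.prod m) :=
    { toFun := Φ
      map_add' := addΦ
      map_smul' := smulΦ
      invFun := Ψ
      left_inv := leftinv
      right_inv := rightinv }
  refine ⟨⟨Ulin₀, normΦ⟩, fun K => ?_, fun L => ?_⟩
  · exact coeΦ K
  · exact coeΨ L
end
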